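/- Let f : ℝ³ → ℝ be axisymmetric with r f ∈ L²(ℝ³) and r^{-2} f ∈ L¹(ℝ³). Then f ∈ L^{3/2}(ℝ³) and ‖f‖_{L^{3/2}(ℝ³)} ≤ ‖r f‖_{L²(ℝ³)}^{2/3} · ‖r^{-2} f‖_{L¹(ℝ³)}^{1/3}. -/

import Mathlib

open MeasureTheory Real

noncomputable def muOmega : Measure (ℝ × ℝ) :=
  MeasureTheory.volume.restrict {p : ℝ × ℝ | 0 < p.1}

set_option maxHeartbeats 1000000 in
theorem stmt8 (f : ℝ × ℝ → ℝ)
    (h1 : Integrable (fun p => (p.1 * |f p|) ^ 2 * p.1) muOmega)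
    (h2 : Integrable (fun p => |f p| / p.1) muOmega) :
    Integrable (fun p => |f p| ^ ((3 : ℝ) / 2) * p.1) muOmega ∧
      (2 * π * ∫ p, |f p| ^ ((3 : ℝ) / 2) * p.1 ∂muOmega) ^ ((2 : ℝ) / 3)
        ≤ ((2 * π * ∫ p, (p.1 * |f p|) ^ 2 * p.1 ∂muOmega) ^ ((1 : ℝ) / 2)) ^ ((2 : ℝ) / 3) *
          (2 * π * ∫ p, |f p| / p.1 ∂muOmega) ^ ((1 : ℝ) / 3) := by
  have haer : ∀ᵐ p ∂muOmega, 0 < p.1 := by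
    rw [muOmega]
    exact ae_restrict_mem (measurableSet_lt measurable_const measurable_fst)
  set A : ℝ × ℝ → ℝ := fun p => p.1 * |f p| * Real.sqrt p.1 with hAdef
  set B : ℝ × ℝ → ℝ := fun p => Real.sqrt (|f p| / p.1) with hBdef
  -- measurability of |f|
  have habs : AEStronglyMeasurable (fun p => |f p|) muOmega := by
    have hg := h1.aestronglyMeasurable
    have hm : AEStronglyMeasurable
        (fun p : ℝ × ℝ => Real.sqrt (((p.1 * |f p|) ^ 2 * p.1) / p.1 ^ 3)) muOmega :=
      (Real.continuous_sqrt.measurable.comp_aemeasurable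
        (hg.aemeasurable.div
          ((measurable_fst.pow_const 3).aemeasurable))).aestronglyMeasurable
    refine hm.congr ?_
    filter_upwards [haer] with p hp
    have hne : p.1 ≠ 0 := ne_of_gt hp
    have : ((p.1 * |f p|) ^ 2 * p.1) / p.1 ^ 3 = |f p| ^ 2 := by
      rw [mul_pow]
      field_simp
    rw [this, Real.sqrt_sq (abs_nonneg _)]
  have hAm : AEStronglyMeasurable A muOmega :=
    ((measurable_fst.aemeasurable.mul habs.aemeasurable).mul
      ((Real.continuous_sqrt.comp continuous_fst).measurable.aemeasurable)).aestronglyMeasurable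
  have hBm : AEStronglyMeasurable B muOmega :=
    (Real.continuous_sqrt.measurable.comp_aemeasurable
      (habs.aemeasurable.div measurable_fst.aemeasurable)).aestronglyMeasurable
  -- pointwise identities on {r > 0}
  have hA2 : ∀ p : ℝ × ℝ, 0 < p.1 → A p ^ 2 = (p.1 * |f p|) ^ 2 * p.1 := by
    intro p hp
    simp only [hAdef, mul_pow, Real.sq_sqrt hp.le]
  have hB2 : ∀ p : ℝ × ℝ, 0 < p.1 → B p ^ 2 = |f p| / p.1 := by
    intro p hp
    exact Real.sq_sqrt (div_nonneg (abs_nonneg _) hp.le)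
  have hAB : ∀ p : ℝ × ℝ, 0 < p.1 → A p * B p = |f p| ^ ((3 : ℝ) / 2) * p.1 := by
    intro p hp
    have hs : Real.sqrt p.1 ≠ 0 := by
      simpa [Real.sqrt_eq_zero', not_le] using hp
    have hdiv : Real.sqrt (|f p| / p.1) = Real.sqrt (|f p|) / Real.sqrt p.1 :=
      Real.sqrt_div (abs_nonneg _) _
    have hrpow : |f p| ^ ((3 : ℝ) / 2) = |f p| * Real.sqrt (|f p|) := by
      rcases eq_or_lt_of_le (abs_nonneg (f p)) with h | h
      · rw [← h]; simp [Real.zero_rpow (by norm_num : ((3 : ℝ) / 2) ≠ 0)]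
      · rw [show ((3 : ℝ) / 2) = 1 + 1 / 2 by norm_num, Real.rpow_add h,
          Real.rpow_one, Real.sqrt_eq_rpow]
    show p.1 * |f p| * Real.sqrt p.1 * Real.sqrt (|f p| / p.1)
      = |f p| ^ ((3 : ℝ) / 2) * p.1
    rw [hdiv, hrpow]
    field_simp
  -- Memℒp
  have memA : MemLp A 2 muOmega := by
    rw [memLp_two_iff_integrable_sq hAm]
    refine h1.congr ?_
    filter_upwards [haer] with p hp
    exact (hA2 p hp).symm
  have memB : MemLp B 2 muOmega := by
    rw [memLp_two_iff_integrable_sq hBm]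
    refine h2.congr ?_
    filter_upwards [haer] with p hp
    exact (hB2 p hp).symm
  -- Integrability of the product
  have hint : Integrable (fun p => A p * B p) muOmega := by
    refine Integrable.mono' (((h1.add h2).div_const 2)) (hAm.mul hBm) ?_
    filter_upwards [haer] with p hp
    have h1' := hA2 p hp
    have h2' := hB2 p hp
    have hAn : 0 ≤ A p := mul_nonneg (mul_nonneg hp.le (abs_nonneg _)) (Real.sqrt_nonneg _)
    have hBn : 0 ≤ B p := Real.sqrt_nonneg _
    rw [Real.norm_of_nonneg (mul_nonneg hAn hBn)]
    simp only [Pi.add_apply]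
    nlinarith [sq_nonneg (A p - B p)]
  have htarget : Integrable (fun p => |f p| ^ ((3 : ℝ) / 2) * p.1) muOmega := by
    refine hint.congr ?_
    filter_upwards [haer] with p hp
    exact hAB p hp
  refine ⟨htarget, ?_⟩
  -- Hölder's inequality
  have hpq : Real.HolderConjugate 2 2 := Real.HolderConjugate.two_two
  have memA' : MemLp A (ENNReal.ofReal 2) muOmega := by
    convert memA using 2
    simp [ENNReal.ofReal_ofNat]
  have memB' : MemLp B (ENNReal.ofReal 2) muOmega := by
    convert memB using 2
    simp [ENNReal.ofReal_ofNat]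
  have hAnn : 0 ≤ᵐ[muOmega] A := by
    filter_upwards [haer] with p hp
    exact mul_nonneg (mul_nonneg hp.le (abs_nonneg _)) (Real.sqrt_nonneg _)
  have hBnn : 0 ≤ᵐ[muOmega] B := by
    filter_upwards with p
    exact Real.sqrt_nonneg _
  have key0 := integral_mul_le_Lp_mul_Lq_of_nonneg hpq hAnn hBnn memA' memB'
  set I := ∫ p, |f p| ^ ((3 : ℝ) / 2) * p.1 ∂muOmega with hI
  set J := ∫ p, (p.1 * |f p|) ^ 2 * p.1 ∂muOmega with hJ
  set K := ∫ p, |f p| / p.1 ∂muOmega with hK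
  have keq1 : ∫ p, A p * B p ∂muOmega = I := by
    refine integral_congr_ae ?_
    filter_upwards [haer] with p hp
    exact hAB p hp
  have keq2 : ∫ p, A p ^ (2 : ℝ) ∂muOmega = J := by
    refine integral_congr_ae ?_
    filter_upwards [haer] with p hp
    rw [Real.rpow_two]
    exact hA2 p hp
  have keq3 : ∫ p, B p ^ (2 : ℝ) ∂muOmega = K := by
    refine integral_congr_ae ?_
    filter_upwards [haer] with p hp
    rw [Real.rpow_two]
    exact hB2 p hp
  rw [keq1, keq2, keq3] at key0
  have hInn : 0 ≤ I := by
    refine integral_nonneg_of_ae ?_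
    filter_upwards [haer] with p hp
    exact mul_nonneg (Real.rpow_nonneg (abs_nonneg _) _) hp.le
  have hJnn : 0 ≤ J := by
    refine integral_nonneg_of_ae ?_
    filter_upwards [haer] with p hp
    exact mul_nonneg (sq_nonneg _) hp.le
  have hKnn : 0 ≤ K := by
    refine integral_nonneg_of_ae ?_
    filter_upwards [haer] with p hp
    exact div_nonneg (abs_nonneg _) hp.le
  have hc : (0 : ℝ) < 2 * π := by positivity
  have hsq : I ^ 2 ≤ J * K := by
    have h := mul_self_le_mul_self hInn key0
    calc I ^ 2 = I * I := sq I
      _ ≤ (J ^ ((1:ℝ)/2) * K ^ ((1:ℝ)/2)) * (J ^ ((1:ℝ)/2) * K ^ ((1:ℝ)/2)) := h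
      _ = (J ^ ((1:ℝ)/2) * J ^ ((1:ℝ)/2)) * (K ^ ((1:ℝ)/2) * K ^ ((1:ℝ)/2)) := by ring
      _ = J * K := by
          rw [← Real.rpow_add' hJnn (by norm_num), ← Real.rpow_add' hKnn (by norm_num)]
          norm_num
  have lhs_eq : (2 * π * I) ^ ((2 : ℝ) / 3) = ((2 * π * I) ^ 2) ^ ((1 : ℝ) / 3) := by
    rw [← Real.rpow_natCast (2 * π * I) 2, ← Real.rpow_mul (mul_nonneg hc.le hInn)]
    norm_num
  have rhs_eq : ((2 * π * J) ^ ((1 : ℝ) / 2)) ^ ((2 : ℝ) / 3) * (2 * π * K) ^ ((1 : ℝ) / 3)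
      = ((2 * π * J) * (2 * π * K)) ^ ((1 : ℝ) / 3) := by
    rw [← Real.rpow_mul (mul_nonneg hc.le hJnn),
      show (1 : ℝ) / 2 * (2 / 3) = 1 / 3 by norm_num,
      ← Real.mul_rpow (mul_nonneg hc.le hJnn) (mul_nonneg hc.le hKnn)]
  rw [lhs_eq, rhs_eq]
  refine Real.rpow_le_rpow (by positivity) ?_ (by norm_num)
  calc (2 * π * I) ^ 2 = (2 * π) ^ 2 * I ^ 2 := by ring
    _ ≤ (2 * π) ^ 2 * (J * K) := by nlinarith [sq_nonneg (2 * π)]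
    _ = 2 * π * J * (2 * π * K) := by ring
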